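/- Let b and s be integers with 2 ≤ b < s, define M̂(x) = ((1+x)^s − 1)/b, and let 𝔳_{b,s}(x) := lim_{n→∞} M̂^n(x·(b/s)^n) (the limit exists). Then: (a) 𝔳_{b,s} is nondecreasing on [0,∞) and satisfies the functional equation 𝔳_{b,s}((s/b)·x) = M̂(𝔳_{b,s}(x)) for all x ≥ 0; (b) 𝔳_{b,s} is differentiable on (0,∞), its derivative satisfies 𝔳_{b,s}'(x) = ∏_{j=1}^∞ (1 + 𝔳_{b,s}(x·(b/s)^j))^{s−1}, and 𝔳_{b,s}'(x) → 1 as x → 0+. -/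

import Mathlib

open Filter

open Real

-- slope bounds for pow
lemma aux_pow_slope {u w : ℝ} (hu : 0 ≤ u) (huw : u ≤ w) (n : ℕ) :
    (n : ℝ) * u ^ (n - 1) * (w - u) ≤ w ^ n - u ^ n ∧
    w ^ n - u ^ n ≤ (n : ℝ) * w ^ (n - 1) * (w - u) := by
  have h := geom_sum₂_mul w u n
  have hsum_lb : (n : ℝ) * u ^ (n - 1) ≤ ∑ i ∈ Finset.range n, w ^ i * u ^ (n - 1 - i) := by
    calc (n : ℝ) * u ^ (n - 1) = ∑ _i ∈ Finset.range n, u ^ (n - 1) := by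
          rw [Finset.sum_const, Finset.card_range, nsmul_eq_mul]
      _ ≤ _ := by
          apply Finset.sum_le_sum
          intro i hi
          have hin : i + (n - 1 - i) = n - 1 := by
            have := Finset.mem_range.mp hi; omega
          calc u ^ (n - 1) = u ^ i * u ^ (n - 1 - i) := by rw [← pow_add, hin]
            _ ≤ w ^ i * u ^ (n - 1 - i) :=
              mul_le_mul_of_nonneg_right (pow_le_pow_left₀ hu huw i) (by positivity)
  have hsum_ub : ∑ i ∈ Finset.range n, w ^ i * u ^ (n - 1 - i) ≤ (n : ℝ) * w ^ (n - 1) := by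
    calc ∑ i ∈ Finset.range n, w ^ i * u ^ (n - 1 - i)
        ≤ ∑ _i ∈ Finset.range n, w ^ (n - 1) := by
          apply Finset.sum_le_sum
          intro i hi
          have hin : i + (n - 1 - i) = n - 1 := by
            have := Finset.mem_range.mp hi; omega
          calc w ^ i * u ^ (n - 1 - i) ≤ w ^ i * w ^ (n - 1 - i) :=
                mul_le_mul_of_nonneg_left (pow_le_pow_left₀ hu huw _) (pow_nonneg (hu.trans huw) i)
            _ = w ^ (n - 1) := by rw [← pow_add, hin]
      _ = (n : ℝ) * w ^ (n - 1) := by rw [Finset.sum_const, Finset.card_range, nsmul_eq_mul]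
  have hwu : 0 ≤ w - u := by linarith
  constructor
  · rw [← h]
    exact mul_le_mul_of_nonneg_right hsum_lb hwu
  · rw [← h]
    exact mul_le_mul_of_nonneg_right hsum_ub hwu

-- exp t - 1 ≤ t exp t
lemma aux_exp_sub_one {t : ℝ} (ht : 0 ≤ t) : Real.exp t - 1 ≤ t * Real.exp t := by
  have h1 := Real.add_one_le_exp (-t)
  have h2 : Real.exp (-t) = (Real.exp t)⁻¹ := Real.exp_neg t
  have h3 := Real.exp_pos t
  rw [h2] at h1
  have h4 : (1 - t) * Real.exp t ≤ 1 := by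
    have := mul_le_mul_of_nonneg_right h1 h3.le
    rw [inv_mul_cancel₀ h3.ne'] at this
    linarith
  nlinarith

set_option maxHeartbeats 2000000 in
/-- For `2 ≤ b < s`, `M̂(x) = ((1+x)^s − 1)/b`, and
`𝔳(x) := lim_{n→∞} M̂^[n](x·(b/s)^n)`:
(a) `𝔳` is nondecreasing on `[0,∞)` and `𝔳((s/b)x) = M̂(𝔳 x)` for all `x ≥ 0`;
(b) `𝔳` is differentiable on `(0,∞)`, its derivative equals the infinite product
`∏_{j=1}^∞ (1 + 𝔳(x·(b/s)^j))^{s−1}`, and `𝔳'(x) → 1` as `x → 0+`. -/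
theorem stmt10 (b s : ℕ) (hb : 2 ≤ b) (hbs : b < s)
    (Mhat : ℝ → ℝ) (hMhat : ∀ x : ℝ, Mhat x = ((1 + x) ^ s - 1) / b)
    (v : ℝ → ℝ)
    (hv : ∀ x : ℝ, 0 ≤ x →
      Tendsto (fun n : ℕ => Mhat^[n] (x * ((b : ℝ) / s) ^ n)) atTop (nhds (v x))) :
    MonotoneOn v (Set.Ici (0 : ℝ)) ∧
    (∀ x : ℝ, 0 ≤ x → v (((s : ℝ) / b) * x) = Mhat (v x)) ∧
    (∀ x : ℝ, 0 < x →
      DifferentiableAt ℝ v x ∧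
      deriv v x = ∏' j : ℕ, (1 + v (x * ((b : ℝ) / s) ^ (j + 1))) ^ (s - 1)) ∧
    Tendsto (fun x : ℝ => deriv v x) (nhdsWithin 0 (Set.Ioi 0)) (nhds 1) := by
  have hb0 : (0:ℝ) < b := by exact_mod_cast lt_of_lt_of_le two_pos hb
  have hs0 : (0:ℝ) < s := by exact_mod_cast lt_of_le_of_lt (Nat.zero_le b) hbs
  have hbsR : (b:ℝ) < s := by exact_mod_cast hbs
  set q : ℝ := (b:ℝ) / s with hqdef
  set L : ℝ := (s:ℝ) / b with hLdef
  have hq0 : 0 < q := by positivity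
  have hq1 : q < 1 := by rw [hqdef, div_lt_one hs0]; exact hbsR
  have hL1 : 1 < L := by rw [hLdef, lt_div_iff₀ hb0]; linarith
  have hL0 : 0 < L := by positivity
  have hLq : L * q = 1 := by rw [hLdef, hqdef]; field_simp
  have hqL : q * L = 1 := by rw [mul_comm]; exact hLq
  have hLqpow : ∀ n : ℕ, L ^ n * q ^ n = 1 := by
    intro n; rw [← mul_pow, hLq, one_pow]
  set m : ℕ := s - 1 with hmdef
  have hsm : s = m + 1 := by omega
  have hmR : (m : ℝ) + 1 = (s : ℝ) := by
    rw [hsm]; push_cast; ring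
  -- basic Mhat facts
  have hMcont : Continuous Mhat := by
    have : Mhat = fun x : ℝ => ((1 + x) ^ s - 1) / b := funext hMhat
    rw [this]; fun_prop
  have hM0 : Mhat 0 = 0 := by rw [hMhat]; simp
  have hMge : ∀ w : ℝ, 0 ≤ w → L * w ≤ Mhat w := by
    intro w hw
    rw [hMhat]
    have h1 : 1 + (s:ℝ) * w ≤ (1 + w) ^ s := by
      have := one_add_mul_le_pow (show (-2:ℝ) ≤ w by linarith) s
      linarith [this]
    rw [le_div_iff₀ hb0]
    have : L * w * b = (s:ℝ) * w := by rw [hLdef]; field_simp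
    rw [this]; linarith
  have hMnonneg : ∀ w : ℝ, 0 ≤ w → 0 ≤ Mhat w := by
    intro w hw
    have := hMge w hw
    nlinarith
  have hMslope : ∀ A B : ℝ, 0 ≤ A → A ≤ B →
      L * (1 + A) ^ m * (B - A) ≤ Mhat B - Mhat A ∧
      Mhat B - Mhat A ≤ L * (1 + B) ^ m * (B - A) := by
    intro A B hA hAB
    have hu : (0:ℝ) ≤ 1 + A := by linarith
    have huw : 1 + A ≤ 1 + B := by linarith
    obtain ⟨h1, h2⟩ := aux_pow_slope hu huw s
    have hdiff : Mhat B - Mhat A = ((1 + B) ^ s - (1 + A) ^ s) / b := by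
      rw [hMhat, hMhat]; ring
    have hwu : (1 + B) - (1 + A) = B - A := by ring
    rw [hwu] at h1 h2
    have hms : s - 1 = m := rfl
    rw [hms] at h1 h2
    constructor
    · rw [hdiff, le_div_iff₀ hb0]
      have : L * (1 + A) ^ m * (B - A) * b = (s:ℝ) * (1 + A) ^ m * (B - A) := by
        rw [hLdef]; field_simp
      rw [this]; exact h1
    · rw [hdiff, div_le_iff₀ hb0]
      have : L * (1 + B) ^ m * (B - A) * b = (s:ℝ) * (1 + B) ^ m * (B - A) := by
        rw [hLdef]; field_simp
      rw [this]; exact h2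
  have hMmono : ∀ A B : ℝ, 0 ≤ A → A ≤ B → Mhat A ≤ Mhat B := by
    intro A B hA hAB
    have h := (hMslope A B hA hAB).1
    have h2 : 0 ≤ L * (1 + A) ^ m * (B - A) :=
      mul_nonneg (mul_nonneg hL0.le (pow_nonneg (by linarith) m)) (by linarith)
    linarith
  have hMexp : ∀ w : ℝ, 0 ≤ w → Mhat w ≤ L * w * Real.exp ((s:ℝ) * w) := by
    intro w hw
    rw [hMhat]
    have h1 : (1 + w) ^ s ≤ Real.exp ((s:ℝ) * w) := by
      rw [Real.exp_nat_mul]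
      exact pow_le_pow_left₀ (by linarith) (by linarith [Real.add_one_le_exp w]) s
    have h2 := aux_exp_sub_one (show 0 ≤ (s:ℝ) * w by positivity)
    rw [div_le_iff₀ hb0]
    have : L * w * Real.exp ((s:ℝ)*w) * b = (s:ℝ) * w * Real.exp ((s:ℝ)*w) := by
      rw [hLdef]; field_simp
    rw [this]; linarith
  -- iterate facts
  have hInonneg : ∀ n : ℕ, ∀ w : ℝ, 0 ≤ w → 0 ≤ Mhat^[n] w := by
    intro n
    induction n with
    | zero => intro w hw; simpa using hw
    | succ n ih =>
      intro w hw
      rw [Function.iterate_succ_apply']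
      exact hMnonneg _ (ih w hw)
  have hImono : ∀ n : ℕ, ∀ A B : ℝ, 0 ≤ A → A ≤ B → Mhat^[n] A ≤ Mhat^[n] B := by
    intro n
    induction n with
    | zero => intro A B _ h; simpa using h
    | succ n ih =>
      intro A B hA hAB
      rw [Function.iterate_succ_apply', Function.iterate_succ_apply']
      exact hMmono _ _ (hInonneg n A hA) (ih A B hA hAB)
  have hIge : ∀ n : ℕ, ∀ w : ℝ, 0 ≤ w → L ^ n * w ≤ Mhat^[n] w := by
    intro n
    induction n with
    | zero => intro w hw; simp
    | succ n ih =>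
      intro w hw
      rw [Function.iterate_succ_apply']
      calc L ^ (n+1) * w = L * (L ^ n * w) := by ring
        _ ≤ L * Mhat^[n] w := by
            exact mul_le_mul_of_nonneg_left (ih w hw) hL0.le
        _ ≤ Mhat (Mhat^[n] w) := hMge _ (hInonneg n w hw)
  -- the approximating sequence
  have hxq : ∀ x : ℝ, 0 ≤ x → ∀ n : ℕ, 0 ≤ x * q ^ n := by
    intro x hx n; positivity
  have hfsucc : ∀ x : ℝ, 0 ≤ x → ∀ n : ℕ,
      Mhat^[n] (x * q ^ n) ≤ Mhat^[n+1] (x * q ^ (n+1)) := by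
    intro x hx n
    rw [Function.iterate_succ_apply]
    have key : x * q ^ n ≤ Mhat (x * q ^ (n+1)) := by
      have h1 := hMge (x * q ^ (n+1)) (hxq x hx (n+1))
      have h2 : L * (x * q ^ (n+1)) = x * q ^ n := by
        rw [pow_succ]
        calc L * (x * (q ^ n * q)) = (L * q) * (x * q ^ n) := by ring
          _ = x * q ^ n := by rw [hLq, one_mul]
      linarith
    exact hImono n _ _ (hxq x hx n) key
  have hfmono : ∀ x : ℝ, 0 ≤ x → Monotone (fun n => Mhat^[n] (x * q ^ n)) := by
    intro x hx
    exact monotone_nat_of_le_succ (hfsucc x hx)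
  have hfle : ∀ x : ℝ, 0 ≤ x → ∀ n : ℕ, Mhat^[n] (x * q ^ n) ≤ v x := by
    intro x hx n
    exact (hfmono x hx).ge_of_tendsto (hv x hx) n
  have hxlev : ∀ x : ℝ, 0 ≤ x → x ≤ v x := by
    intro x hx
    have := hfle x hx 0
    simpa using this
  have hvnonneg : ∀ x : ℝ, 0 ≤ x → 0 ≤ v x := fun x hx => hx.trans (hxlev x hx)
  have hvmono : ∀ x y : ℝ, 0 ≤ x → x ≤ y → v x ≤ v y := by
    intro x y hx hxy
    refine le_of_tendsto_of_tendsto' (hv x hx) (hv y (hx.trans hxy)) fun n => ?_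
    exact hImono n _ _ (hxq x hx n) (by nlinarith [pow_pos hq0 n])
  have hvmonoOn : MonotoneOn v (Set.Ici (0:ℝ)) := fun x hx y _ hxy => hvmono x y hx hxy
  -- functional equation
  have hFE : ∀ x : ℝ, 0 ≤ x → v (L * x) = Mhat (v x) := by
    intro x hx
    have hLx : 0 ≤ L * x := by positivity
    have h1 : Tendsto (fun n : ℕ => Mhat^[n+1] ((L * x) * q ^ (n+1))) atTop (nhds (v (L * x))) :=
      (hv (L * x) hLx).comp (tendsto_add_atTop_nat 1)
    have h2 : (fun n : ℕ => Mhat^[n+1] ((L * x) * q ^ (n+1)))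
        = fun n : ℕ => Mhat (Mhat^[n] (x * q ^ n)) := by
      funext n
      rw [Function.iterate_succ_apply']
      congr 1
      congr 1
      rw [pow_succ]
      calc L * x * (q ^ n * q) = (L * q) * (x * q ^ n) := by ring
        _ = x * q ^ n := by rw [hLq, one_mul]
    rw [h2] at h1
    have h3 : Tendsto (fun n : ℕ => Mhat (Mhat^[n] (x * q ^ n))) atTop (nhds (Mhat (v x))) :=
      (hMcont.tendsto (v x)).comp (hv x hx)
    exact tendsto_nhds_unique h1 h3
  -- single-step identity
  have hvstep : ∀ z : ℝ, 0 ≤ z → v z = Mhat (v (z * q)) := by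
    intro z hz
    have h := hFE (z * q) (by positivity)
    have h2 : L * (z * q) = z := by
      calc L * (z * q) = (L * q) * z := by ring
        _ = z := by rw [hLq, one_mul]
    rw [h2] at h
    exact h
  have hvq : ∀ x : ℝ, 0 ≤ x → v (x * q) ≤ q * v x := by
    intro x hx
    have h := hvstep x hx
    have h2 := hMge (v (x * q)) (hvnonneg _ (by positivity))
    have h3 : L * v (x * q) ≤ v x := by rw [h]; exact h2
    have h4 := mul_le_mul_of_nonneg_left h3 hq0.le
    calc v (x * q) = (q * L) * v (x * q) := by rw [hqL, one_mul]
      _ = q * (L * v (x * q)) := by ring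
      _ ≤ q * v x := h4
  have hvqj : ∀ x : ℝ, 0 ≤ x → ∀ j : ℕ, v (x * q ^ j) ≤ q ^ j * v x := by
    intro x hx j
    induction j with
    | zero => simp
    | succ j ih =>
      have h1 : x * q ^ (j+1) = (x * q ^ j) * q := by ring
      rw [h1]
      calc v ((x * q ^ j) * q) ≤ q * v (x * q ^ j) := hvq _ (by positivity)
        _ ≤ q * (q ^ j * v x) := mul_le_mul_of_nonneg_left ih hq0.le
        _ = q ^ (j+1) * v x := by ring
  have hvIter : ∀ x : ℝ, 0 ≤ x → ∀ n : ℕ, v x = Mhat^[n] (v (x * q ^ n)) := by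
    intro x hx n
    induction n with
    | zero => simp
    | succ n ih =>
      rw [Function.iterate_succ_apply]
      have h1 : v (x * q ^ n) = Mhat (v (x * q ^ (n+1))) := by
        have := hvstep (x * q ^ n) (by positivity)
        rw [this]; congr 2; ring
      rw [ih, h1]
  -- geometric sum bound
  have hgeo : ∀ n : ℕ, ∑ i ∈ Finset.range n, q ^ (i+1) ≤ q / (1 - q) := by
    intro n
    have h1 : ∑ i ∈ Finset.range n, q ^ (i+1) = q * ∑ i ∈ Finset.range n, q ^ i := by
      rw [Finset.mul_sum]
      exact Finset.sum_congr rfl fun i _ => by ring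
    rw [h1, div_eq_mul_inv]
    refine mul_le_mul_of_nonneg_left ?_ hq0.le
    have h1q : (0:ℝ) < 1 - q := by linarith
    rw [geom_sum_eq hq1.ne n]
    have h2 : (q ^ n - 1)/(q - 1) = (1 - q ^ n)/(1 - q) := by
      rw [div_eq_div_iff (by linarith) (by linarith)]; ring
    rw [h2, div_eq_mul_inv]
    have h3 : 1 - q ^ n ≤ 1 := by nlinarith [pow_nonneg hq0.le n]
    calc (1 - q ^ n) * (1 - q)⁻¹ ≤ 1 * (1 - q)⁻¹ :=
          mul_le_mul_of_nonneg_right h3 (inv_nonneg.mpr h1q.le)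
      _ = (1 - q)⁻¹ := one_mul _
  have hgeo' : ∀ n : ℕ, ∑ i ∈ Finset.range n, q ^ (n - i) ≤ q / (1 - q) := by
    intro n
    have h := Finset.sum_range_reflect (fun j => q ^ (j+1)) n
    have h2 : ∑ i ∈ Finset.range n, q ^ (n - i) = ∑ j ∈ Finset.range n, q ^ (j+1) := by
      rw [← h]
      refine Finset.sum_congr rfl fun i hi => ?_
      have := Finset.mem_range.mp hi
      congr 1
      omega
    rw [h2]
    exact hgeo n
  set C : ℝ := (s:ℝ) * q / (1 - q) with hCdef
  have hC0 : 0 ≤ C := by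
    rw [hCdef]
    have : 0 < 1 - q := by linarith
    positivity
  -- upper bound : v x ≤ x * exp (C * v x)
  have hvup : ∀ x : ℝ, 0 ≤ x → v x ≤ x * Real.exp (C * v x) := by
    intro x hx
    refine le_of_tendsto (hv x hx) (Filter.Eventually.of_forall fun n => ?_)
    -- inner claim
    have claim : ∀ k : ℕ, k ≤ n → Mhat^[k] (x * q ^ n) ≤
        L ^ k * (x * q ^ n) * Real.exp ((s:ℝ) * v x * ∑ i ∈ Finset.range k, q ^ (n - i)) := by
      intro k
      induction k with
      | zero =>
        intro _
        simp
      | succ k ih =>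
        intro hkn
        have hk : k ≤ n := by omega
        have ihk := ih hk
        set g : ℝ := Mhat^[k] (x * q ^ n) with hgdef
        have hg0 : 0 ≤ g := hInonneg k _ (by positivity)
        have hgv : g ≤ q ^ (n - k) * v x := by
          have harg : x * q ^ n = (x * q ^ (n - k)) * q ^ k := by
            rw [mul_assoc, ← pow_add]
            congr 2
            omega
          have h1 : g ≤ v (x * q ^ (n - k)) := by
            rw [hgdef, harg]
            exact hfle (x * q ^ (n - k)) (by positivity) k
          exact h1.trans (hvqj x hx (n - k))
        rw [Function.iterate_succ_apply', ← hgdef]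
        calc Mhat g ≤ L * g * Real.exp ((s:ℝ) * g) := hMexp g hg0
          _ ≤ L * (L ^ k * (x * q ^ n) * Real.exp ((s:ℝ) * v x * ∑ i ∈ Finset.range k, q ^ (n - i)))
              * Real.exp ((s:ℝ) * g) := by
              refine mul_le_mul_of_nonneg_right (mul_le_mul_of_nonneg_left ihk hL0.le) ?_
              positivity
          _ ≤ L * (L ^ k * (x * q ^ n) * Real.exp ((s:ℝ) * v x * ∑ i ∈ Finset.range k, q ^ (n - i)))
              * Real.exp ((s:ℝ) * (q ^ (n - k) * v x)) := by
              refine mul_le_mul_of_nonneg_left ?_ (by positivity)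
              exact Real.exp_le_exp.mpr (mul_le_mul_of_nonneg_left hgv (by positivity))
          _ = L ^ (k+1) * (x * q ^ n) *
              Real.exp ((s:ℝ) * v x * ∑ i ∈ Finset.range (k+1), q ^ (n - i)) := by
              have harg2 : (s:ℝ) * (q ^ (n - k) * v x) = (s:ℝ) * v x * q ^ (n - k) := by ring
              rw [harg2, Finset.sum_range_succ, mul_add, Real.exp_add]
              ring
    have hfinal := claim n le_rfl
    have h1 : L ^ n * (x * q ^ n) = x := by
      calc L ^ n * (x * q ^ n) = (L ^ n * q ^ n) * x := by ring
        _ = x := by rw [hLqpow n, one_mul]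
    calc Mhat^[n] (x * q ^ n) ≤ L ^ n * (x * q ^ n) *
          Real.exp ((s:ℝ) * v x * ∑ i ∈ Finset.range n, q ^ (n - i)) := hfinal
      _ ≤ L ^ n * (x * q ^ n) * Real.exp ((s:ℝ) * v x * (q / (1 - q))) := by
          refine mul_le_mul_of_nonneg_left ?_ (by positivity)
          exact Real.exp_le_exp.mpr
            (mul_le_mul_of_nonneg_left (hgeo' n) (mul_nonneg hs0.le (hvnonneg x hx)))
      _ = x * Real.exp (C * v x) := by
          rw [h1, hCdef]
          congr 2
          ring
  -- infinite product facts
  have hwpos : ∀ y : ℝ, 0 ≤ y → ∀ j : ℕ, 0 < 1 + v (y * q ^ (j+1)) := by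
    intro y hy j
    have := hvnonneg (y * q ^ (j+1)) (by positivity); linarith
  have hlognn : ∀ y : ℝ, 0 ≤ y → ∀ j : ℕ, 0 ≤ Real.log (1 + v (y * q ^ (j+1))) := by
    intro y hy j
    apply Real.log_nonneg
    have := hvnonneg (y * q ^ (j+1)) (by positivity); linarith
  have hlogle : ∀ y : ℝ, 0 ≤ y → ∀ j : ℕ,
      (m:ℝ) * Real.log (1 + v (y * q ^ (j+1))) ≤ ((m:ℝ) * v y * q) * q ^ j := by
    intro y hy j
    have h1 := Real.log_le_sub_one_of_pos (hwpos y hy j)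
    have h2 := hvqj y hy (j+1)
    have h3 : Real.log (1 + v (y * q ^ (j+1))) ≤ q ^ (j+1) * v y := by linarith
    calc (m:ℝ) * Real.log (1 + v (y * q ^ (j+1))) ≤ (m:ℝ) * (q ^ (j+1) * v y) :=
          mul_le_mul_of_nonneg_left h3 (Nat.cast_nonneg m)
      _ = ((m:ℝ) * v y * q) * q ^ j := by ring
  have hsummable : ∀ y : ℝ, 0 ≤ y →
      Summable (fun j : ℕ => (m:ℝ) * Real.log (1 + v (y * q ^ (j+1)))) := by
    intro y hy
    exact Summable.of_nonneg_of_le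
      (fun j => mul_nonneg (Nat.cast_nonneg m) (hlognn y hy j))
      (fun j => hlogle y hy j)
      ((summable_geometric_of_lt_one hq0.le hq1).mul_left ((m:ℝ) * v y * q))
  have hhp : ∀ y : ℝ, 0 ≤ y → HasProd (fun j : ℕ => (1 + v (y * q ^ (j+1))) ^ m)
      (Real.exp (∑' j : ℕ, (m:ℝ) * Real.log (1 + v (y * q ^ (j+1))))) := by
    intro y hy
    have h := (hsummable y hy).hasSum.rexp
    have h2 : (rexp ∘ fun j : ℕ => (m:ℝ) * Real.log (1 + v (y * q ^ (j+1))))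
        = fun j : ℕ => (1 + v (y * q ^ (j+1))) ^ m := by
      funext j
      simp only [Function.comp_apply]
      rw [Real.exp_nat_mul, Real.exp_log (hwpos y hy j)]
    rwa [h2] at h
  obtain ⟨Pf, hPfdef⟩ : ∃ Pf : ℝ → ℝ, ∀ y : ℝ, Pf y = ∏' j : ℕ, (1 + v (y * q ^ (j+1))) ^ m :=
    ⟨_, fun _ => rfl⟩
  have htprod : ∀ y : ℝ, 0 ≤ y →
      Pf y = Real.exp (∑' j : ℕ, (m:ℝ) * Real.log (1 + v (y * q ^ (j+1)))) :=
    fun y hy => (hPfdef y).trans (hhp y hy).tprod_eq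
  have hPt : ∀ y : ℝ, 0 ≤ y →
      Tendsto (fun n => ∏ j ∈ Finset.range n, (1 + v (y * q ^ (j+1))) ^ m)
        atTop (nhds (Pf y)) := by
    intro y hy
    have := (hhp y hy).multipliable.hasProd.tendsto_prod_nat
    rwa [← hPfdef y] at this
  have hfac1 : ∀ y : ℝ, 0 ≤ y → ∀ j : ℕ, 1 ≤ (1 + v (y * q ^ (j+1))) ^ m := by
    intro y hy j
    apply one_le_pow₀
    have := hvnonneg (y * q ^ (j+1)) (by positivity); linarith
  have hPp1 : ∀ y : ℝ, 0 ≤ y → ∀ n : ℕ,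
      1 ≤ ∏ j ∈ Finset.range n, (1 + v (y * q ^ (j+1))) ^ m := by
    intro y hy n
    calc (1:ℝ) = ∏ _j ∈ Finset.range n, (1:ℝ) := by simp
      _ ≤ _ := Finset.prod_le_prod (by simp) (fun j _ => hfac1 y hy j)
  have hPpmono : ∀ y : ℝ, 0 ≤ y →
      Monotone (fun n => ∏ j ∈ Finset.range n, (1 + v (y * q ^ (j+1))) ^ m) := by
    intro y hy
    apply monotone_nat_of_le_succ
    intro n
    rw [Finset.prod_range_succ]
    have h1 : (0:ℝ) ≤ ∏ j ∈ Finset.range n, (1 + v (y * q ^ (j+1))) ^ m :=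
      le_trans zero_le_one (hPp1 y hy n)
    nlinarith [hfac1 y hy n]
  have hPple : ∀ y : ℝ, 0 ≤ y → ∀ n : ℕ,
      (∏ j ∈ Finset.range n, (1 + v (y * q ^ (j+1))) ^ m) ≤ Pf y :=
    fun y hy => (hPpmono y hy).ge_of_tendsto (hPt y hy)
  have hPf1 : ∀ y : ℝ, 0 ≤ y → 1 ≤ Pf y := by
    intro y hy
    have := hPple y hy 0
    simpa using this
  have hPfmono : ∀ x y : ℝ, 0 ≤ x → x ≤ y → Pf x ≤ Pf y := by
    intro x y hx hxy
    refine le_of_tendsto_of_tendsto' (hPt x hx) (hPt y (hx.trans hxy)) fun n => ?_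
    refine Finset.prod_le_prod (fun j _ => le_trans zero_le_one (hfac1 x hx j)) fun j _ => ?_
    apply pow_le_pow_left₀
    · have := hvnonneg (x * q ^ (j+1)) (by positivity); linarith
    · have := hvmono (x * q ^ (j+1)) (y * q ^ (j+1)) (by positivity)
        (mul_le_mul_of_nonneg_right hxy (by positivity))
      linarith
  obtain ⟨D, hDdef⟩ : ∃ D : ℝ, D = (m:ℝ) * (q / (1 - q)) := ⟨_, rfl⟩
  have hD0 : 0 ≤ D := by
    rw [hDdef]
    have h1q : (0:ℝ) < 1 - q := by linarith
    positivity
  have hPfub : ∀ y : ℝ, 0 ≤ y → Pf y ≤ Real.exp (D * v y) := by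
    intro y hy
    rw [htprod y hy]
    apply Real.exp_le_exp.mpr
    have hsum2 : Summable (fun j : ℕ => ((m:ℝ) * v y * q) * q ^ j) :=
      (summable_geometric_of_lt_one hq0.le hq1).mul_left _
    calc ∑' j : ℕ, (m:ℝ) * Real.log (1 + v (y * q ^ (j+1)))
        ≤ ∑' j : ℕ, ((m:ℝ) * v y * q) * q ^ j :=
          Summable.tsum_le_tsum (fun j => hlogle y hy j) (hsummable y hy) hsum2
      _ = ((m:ℝ) * v y * q) * (1-q)⁻¹ := by
          rw [tsum_mul_left, tsum_geometric_of_lt_one hq0.le hq1]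
      _ = D * v y := by rw [hDdef]; field_simp
  -- slope chain inequalities
  have hK1 : ∀ x y : ℝ, 0 ≤ x → x ≤ y → ∀ n : ℕ,
      v y - v x ≤ L ^ n * (∏ j ∈ Finset.range n, (1 + v (y * q ^ (j+1))) ^ m) *
        (v (y * q ^ n) - v (x * q ^ n)) := by
    intro x y hx hxy n
    induction n with
    | zero => simp
    | succ n ih =>
      have hy : 0 ≤ y := hx.trans hxy
      have hA0 : 0 ≤ v (x * q ^ (n+1)) := hvnonneg _ (by positivity)
      have hAB : v (x * q ^ (n+1)) ≤ v (y * q ^ (n+1)) :=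
        hvmono _ _ (by positivity) (mul_le_mul_of_nonneg_right hxy (by positivity))
      have hsx : v (x * q ^ n) = Mhat (v (x * q ^ (n+1))) := by
        have := hvstep (x * q ^ n) (by positivity)
        rw [this]; congr 2; ring
      have hsy : v (y * q ^ n) = Mhat (v (y * q ^ (n+1))) := by
        have := hvstep (y * q ^ n) (by positivity)
        rw [this]; congr 2; ring
      have h2 := (hMslope _ _ hA0 hAB).2
      have hPnn : (0:ℝ) ≤ L ^ n * ∏ j ∈ Finset.range n, (1 + v (y * q ^ (j+1))) ^ m :=
        mul_nonneg (pow_nonneg hL0.le n) (le_trans zero_le_one (hPp1 y hy n))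
      calc v y - v x ≤ L ^ n * (∏ j ∈ Finset.range n, (1 + v (y * q ^ (j+1))) ^ m) *
            (v (y * q ^ n) - v (x * q ^ n)) := ih
        _ = L ^ n * (∏ j ∈ Finset.range n, (1 + v (y * q ^ (j+1))) ^ m) *
            (Mhat (v (y * q ^ (n+1))) - Mhat (v (x * q ^ (n+1)))) := by rw [hsx, hsy]
        _ ≤ L ^ n * (∏ j ∈ Finset.range n, (1 + v (y * q ^ (j+1))) ^ m) *
            (L * (1 + v (y * q ^ (n+1))) ^ m *
              (v (y * q ^ (n+1)) - v (x * q ^ (n+1)))) :=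
            mul_le_mul_of_nonneg_left h2 hPnn
        _ = L ^ (n+1) * (∏ j ∈ Finset.range (n+1), (1 + v (y * q ^ (j+1))) ^ m) *
            (v (y * q ^ (n+1)) - v (x * q ^ (n+1))) := by
            rw [Finset.prod_range_succ]; ring
  have hK2 : ∀ x y : ℝ, 0 ≤ x → x ≤ y → ∀ n : ℕ,
      L ^ n * (∏ j ∈ Finset.range n, (1 + v (x * q ^ (j+1))) ^ m) *
        (v (y * q ^ n) - v (x * q ^ n)) ≤ v y - v x := by
    intro x y hx hxy n
    induction n with
    | zero => simp
    | succ n ih =>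
      have hy : 0 ≤ y := hx.trans hxy
      have hA0 : 0 ≤ v (x * q ^ (n+1)) := hvnonneg _ (by positivity)
      have hAB : v (x * q ^ (n+1)) ≤ v (y * q ^ (n+1)) :=
        hvmono _ _ (by positivity) (mul_le_mul_of_nonneg_right hxy (by positivity))
      have hsx : v (x * q ^ n) = Mhat (v (x * q ^ (n+1))) := by
        have := hvstep (x * q ^ n) (by positivity)
        rw [this]; congr 2; ring
      have hsy : v (y * q ^ n) = Mhat (v (y * q ^ (n+1))) := by
        have := hvstep (y * q ^ n) (by positivity)
        rw [this]; congr 2; ring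
      have h2 := (hMslope _ _ hA0 hAB).1
      have hPnn : (0:ℝ) ≤ L ^ n * ∏ j ∈ Finset.range n, (1 + v (x * q ^ (j+1))) ^ m :=
        mul_nonneg (pow_nonneg hL0.le n) (le_trans zero_le_one (hPp1 x hx n))
      calc L ^ (n+1) * (∏ j ∈ Finset.range (n+1), (1 + v (x * q ^ (j+1))) ^ m) *
            (v (y * q ^ (n+1)) - v (x * q ^ (n+1)))
          = L ^ n * (∏ j ∈ Finset.range n, (1 + v (x * q ^ (j+1))) ^ m) *
            (L * (1 + v (x * q ^ (n+1))) ^ m *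
              (v (y * q ^ (n+1)) - v (x * q ^ (n+1)))) := by
            rw [Finset.prod_range_succ]; ring
        _ ≤ L ^ n * (∏ j ∈ Finset.range n, (1 + v (x * q ^ (j+1))) ^ m) *
            (Mhat (v (y * q ^ (n+1))) - Mhat (v (x * q ^ (n+1)))) :=
            mul_le_mul_of_nonneg_left h2 hPnn
        _ = L ^ n * (∏ j ∈ Finset.range n, (1 + v (x * q ^ (j+1))) ^ m) *
            (v (y * q ^ n) - v (x * q ^ n)) := by rw [hsx, hsy]
        _ ≤ v y - v x := ih
  -- upper slope bound
  have hup : ∀ x y : ℝ, 0 ≤ x → x ≤ y → v y - v x ≤ Pf y * (y - x) := by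
    intro x y hx hxy
    have hy : 0 ≤ y := hx.trans hxy
    have t1 : Tendsto (fun n : ℕ => C * v y * q ^ n) atTop (nhds 0) := by
      simpa using (tendsto_pow_atTop_nhds_zero_of_lt_one hq0.le hq1).const_mul (C * v y)
    have t2 : Tendsto (fun n : ℕ => Real.exp (C * v y * q ^ n)) atTop (nhds 1) := by
      have := (Real.continuous_exp.tendsto 0).comp t1
      simpa [Function.comp_def] using this
    have t3 : Tendsto (fun n : ℕ =>
        (∏ j ∈ Finset.range n, (1 + v (y * q ^ (j+1))) ^ m) *
          (y * Real.exp (C * v y * q ^ n) - x)) atTop (nhds (Pf y * (y - x))) := by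
      have := (hPt y hy).mul (((t2.const_mul y).sub (tendsto_const_nhds (x := x))))
      simpa using this
    refine ge_of_tendsto t3 (Filter.Eventually.of_forall fun n => ?_)
    have hbd : v (y * q ^ n) - v (x * q ^ n) ≤
        y * q ^ n * Real.exp (C * v y * q ^ n) - x * q ^ n := by
      have h1 : v (y * q ^ n) ≤ (y * q ^ n) * Real.exp (C * v (y * q ^ n)) :=
        hvup _ (by positivity)
      have h2 : C * v (y * q ^ n) ≤ C * v y * q ^ n := by
        have := hvqj y hy n
        have h3 : C * v (y * q ^ n) ≤ C * (q ^ n * v y) :=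
          mul_le_mul_of_nonneg_left this hC0
        linarith [h3]
      have h4 : (y * q ^ n) * Real.exp (C * v (y * q ^ n)) ≤
          (y * q ^ n) * Real.exp (C * v y * q ^ n) :=
        mul_le_mul_of_nonneg_left (Real.exp_le_exp.mpr h2) (by positivity)
      have h5 := hxlev (x * q ^ n) (by positivity)
      linarith
    calc v y - v x ≤ L ^ n * (∏ j ∈ Finset.range n, (1 + v (y * q ^ (j+1))) ^ m) *
          (v (y * q ^ n) - v (x * q ^ n)) := hK1 x y hx hxy n
      _ ≤ L ^ n * (∏ j ∈ Finset.range n, (1 + v (y * q ^ (j+1))) ^ m) *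
          (y * q ^ n * Real.exp (C * v y * q ^ n) - x * q ^ n) :=
          mul_le_mul_of_nonneg_left hbd
            (mul_nonneg (pow_nonneg hL0.le n) (le_trans zero_le_one (hPp1 y hy n)))
      _ = (∏ j ∈ Finset.range n, (1 + v (y * q ^ (j+1))) ^ m) *
          (y * Real.exp (C * v y * q ^ n) - x) := by
          have : L ^ n * (∏ j ∈ Finset.range n, (1 + v (y * q ^ (j+1))) ^ m) *
              (y * q ^ n * Real.exp (C * v y * q ^ n) - x * q ^ n)
              = (L ^ n * q ^ n) * ((∏ j ∈ Finset.range n, (1 + v (y * q ^ (j+1))) ^ m) *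
                (y * Real.exp (C * v y * q ^ n) - x)) := by ring
          rw [this, hLqpow n, one_mul]
  -- lower slope bound
  have hlow : ∀ x y : ℝ, 0 ≤ x → x ≤ y → Pf x * (y - x) ≤ v y - v x := by
    intro x y hx hxy
    have hy : 0 ≤ y := hx.trans hxy
    have t1 : Tendsto (fun n : ℕ => C * v x * q ^ n) atTop (nhds 0) := by
      simpa using (tendsto_pow_atTop_nhds_zero_of_lt_one hq0.le hq1).const_mul (C * v x)
    have t2 : Tendsto (fun n : ℕ => Real.exp (C * v x * q ^ n)) atTop (nhds 1) := by
      have := (Real.continuous_exp.tendsto 0).comp t1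
      simpa [Function.comp_def] using this
    have t3 : Tendsto (fun n : ℕ =>
        (∏ j ∈ Finset.range n, (1 + v (x * q ^ (j+1))) ^ m) *
          (y - x * Real.exp (C * v x * q ^ n))) atTop (nhds (Pf x * (y - x))) := by
      have := (hPt x hx).mul ((tendsto_const_nhds (x := y)).sub (t2.const_mul x))
      simpa using this
    refine le_of_tendsto t3 (Filter.Eventually.of_forall fun n => ?_)
    have hbd : y * q ^ n - x * q ^ n * Real.exp (C * v x * q ^ n) ≤
        v (y * q ^ n) - v (x * q ^ n) := by
      have h1 : v (x * q ^ n) ≤ (x * q ^ n) * Real.exp (C * v (x * q ^ n)) :=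
        hvup _ (by positivity)
      have h2 : C * v (x * q ^ n) ≤ C * v x * q ^ n := by
        have := hvqj x hx n
        have h3 : C * v (x * q ^ n) ≤ C * (q ^ n * v x) :=
          mul_le_mul_of_nonneg_left this hC0
        linarith [h3]
      have h4 : (x * q ^ n) * Real.exp (C * v (x * q ^ n)) ≤
          (x * q ^ n) * Real.exp (C * v x * q ^ n) :=
        mul_le_mul_of_nonneg_left (Real.exp_le_exp.mpr h2) (by positivity)
      have h5 := hxlev (y * q ^ n) (by positivity)
      linarith
    calc (∏ j ∈ Finset.range n, (1 + v (x * q ^ (j+1))) ^ m) *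
          (y - x * Real.exp (C * v x * q ^ n))
        = L ^ n * (∏ j ∈ Finset.range n, (1 + v (x * q ^ (j+1))) ^ m) *
          (y * q ^ n - x * q ^ n * Real.exp (C * v x * q ^ n)) := by
          have : L ^ n * (∏ j ∈ Finset.range n, (1 + v (x * q ^ (j+1))) ^ m) *
              (y * q ^ n - x * q ^ n * Real.exp (C * v x * q ^ n))
              = (L ^ n * q ^ n) * ((∏ j ∈ Finset.range n, (1 + v (x * q ^ (j+1))) ^ m) *
                (y - x * Real.exp (C * v x * q ^ n))) := by ring
          rw [this, hLqpow n, one_mul]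
      _ ≤ L ^ n * (∏ j ∈ Finset.range n, (1 + v (x * q ^ (j+1))) ^ m) *
          (v (y * q ^ n) - v (x * q ^ n)) :=
          mul_le_mul_of_nonneg_left hbd
            (mul_nonneg (pow_nonneg hL0.le n) (le_trans zero_le_one (hPp1 x hx n)))
      _ ≤ v y - v x := hK2 x y hx hxy n
  -- continuity of v on (0, ∞)
  have hvcont : ∀ x : ℝ, 0 < x → ContinuousAt v x := by
    intro x hx
    have hK0 : 0 ≤ Pf (x+1) := le_trans zero_le_one (hPf1 (x+1) (by linarith))
    have hmem : Set.Ioo (0:ℝ) (x+1) ∈ nhds x := isOpen_Ioo.mem_nhds ⟨hx, by linarith⟩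
    have hub2 : ∀ᶠ y in nhds x, v y ≤ v x + Pf (x+1) * |y - x| := by
      filter_upwards [hmem] with y hy
      rcases le_total y x with h | h
      · have h1 : v y ≤ v x := hvmono y x hy.1.le h
        have h2 : 0 ≤ Pf (x+1) * |y - x| := mul_nonneg hK0 (abs_nonneg _)
        linarith
      · have h1 := hup x y hx.le h
        have h2 : Pf y ≤ Pf (x+1) := hPfmono y (x+1) hy.1.le hy.2.le
        have h3 : Pf y * (y - x) ≤ Pf (x+1) * (y - x) :=
          mul_le_mul_of_nonneg_right h2 (by linarith)
        have h4 : |y - x| = y - x := abs_of_nonneg (by linarith)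
        rw [h4]; linarith
    have hlb2 : ∀ᶠ y in nhds x, v x - Pf (x+1) * |y - x| ≤ v y := by
      filter_upwards [hmem] with y hy
      rcases le_total y x with h | h
      · have h1 := hup y x hy.1.le h
        have h2 : Pf x ≤ Pf (x+1) := hPfmono x (x+1) hx.le (by linarith)
        have h3 : Pf x * (x - y) ≤ Pf (x+1) * (x - y) :=
          mul_le_mul_of_nonneg_right h2 (by linarith)
        have h4 : |y - x| = x - y := by rw [abs_sub_comm]; exact abs_of_nonneg (by linarith)
        rw [h4]; linarith
      · have h1 : v x ≤ v y := hvmono x y hx.le h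
        have h2 : 0 ≤ Pf (x+1) * |y - x| := mul_nonneg hK0 (abs_nonneg _)
        linarith
    have habs : Tendsto (fun y : ℝ => |y - x|) (nhds x) (nhds 0) := by
      have := ((continuous_id.sub (continuous_const (y := x))).abs).tendsto x
      simpa using this
    have hto1 : Tendsto (fun y => v x + Pf (x+1) * |y - x|) (nhds x) (nhds (v x)) := by
      have := tendsto_const_nhds (x := v x) (f := nhds x) |>.add (habs.const_mul (Pf (x+1)))
      simpa using this
    have hto2 : Tendsto (fun y => v x - Pf (x+1) * |y - x|) (nhds x) (nhds (v x)) := by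
      have := tendsto_const_nhds (x := v x) (f := nhds x) |>.sub (habs.const_mul (Pf (x+1)))
      simpa using this
    exact tendsto_of_tendsto_of_tendsto_of_le_of_le' hto2 hto1 hlb2 hub2
  -- continuity of Pf on (0, ∞)
  have hPfcont : ∀ x : ℝ, 0 < x → ContinuousAt Pf x := by
    intro x hx
    set c : ℝ → ℝ := fun y => max (x/2) (min y (x+1)) with hcdef
    have hccont : Continuous c := continuous_const.max (continuous_id.min continuous_const)
    have hcrange : ∀ y : ℝ, x/2 ≤ c y ∧ c y ≤ x+1 := by
      intro y
      constructor
      · exact le_max_left _ _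
      · exact max_le (by linarith) (min_le_right _ _)
    have hcpos : ∀ y : ℝ, 0 < c y := fun y => lt_of_lt_of_le (by linarith) (hcrange y).1
    have hterm_cont : ∀ j : ℕ,
        Continuous (fun y => (m:ℝ) * Real.log (1 + v (c y * q ^ (j+1)))) := by
      intro j
      apply Continuous.mul continuous_const
      rw [continuous_iff_continuousAt]
      intro y
      have hz : 0 < c y * q ^ (j+1) := by
        have := hcpos y
        positivity
      have h1 : ContinuousAt v (c y * q ^ (j+1)) := hvcont _ hz
      have h2 : ContinuousAt (fun y => c y * q ^ (j+1)) y :=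
        (hccont.mul continuous_const).continuousAt
      have h3 : ContinuousAt (fun y => v (c y * q ^ (j+1))) y :=
        ContinuousAt.comp (g := v) (f := fun y => c y * q ^ (j+1)) h1 h2
      have h4 : ContinuousAt (fun y => 1 + v (c y * q ^ (j+1))) y := continuousAt_const.add h3
      have h5 : (0:ℝ) < 1 + v (c y * q ^ (j+1)) := hwpos (c y) (hcpos y).le j
      exact ContinuousAt.comp (g := Real.log) (f := fun y => 1 + v (c y * q ^ (j+1)))
        (Real.continuousAt_log (ne_of_gt h5)) h4
    have hbound : ∀ (j : ℕ) (y : ℝ),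
        ‖(m:ℝ) * Real.log (1 + v (c y * q ^ (j+1)))‖ ≤ ((m:ℝ) * v (x+1) * q) * q ^ j := by
      intro j y
      rw [Real.norm_eq_abs,
        abs_of_nonneg (mul_nonneg (Nat.cast_nonneg m) (hlognn (c y) (hcpos y).le j))]
      calc (m:ℝ) * Real.log (1 + v (c y * q ^ (j+1)))
          ≤ ((m:ℝ) * v (c y) * q) * q ^ j := hlogle (c y) (hcpos y).le j
        _ ≤ ((m:ℝ) * v (x+1) * q) * q ^ j := by
            have h6 : v (c y) ≤ v (x+1) := hvmono (c y) (x+1) (hcpos y).le (hcrange y).2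
            have h7 : (m:ℝ) * v (c y) ≤ (m:ℝ) * v (x+1) :=
              mul_le_mul_of_nonneg_left h6 (Nat.cast_nonneg m)
            have h8 : (m:ℝ) * v (c y) * q ≤ (m:ℝ) * v (x+1) * q :=
              mul_le_mul_of_nonneg_right h7 hq0.le
            exact mul_le_mul_of_nonneg_right h8 (by positivity)
    have hsumb : Summable (fun j : ℕ => ((m:ℝ) * v (x+1) * q) * q ^ j) :=
      (summable_geometric_of_lt_one hq0.le hq1).mul_left _
    have hUcont : Continuous (fun y => ∑' j : ℕ, (m:ℝ) * Real.log (1 + v (c y * q ^ (j+1)))) :=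
      continuous_tsum hterm_cont hsumb (fun j y => hbound j y)
    have heq : ∀ᶠ y in nhds x,
        Real.exp (∑' j : ℕ, (m:ℝ) * Real.log (1 + v (c y * q ^ (j+1)))) = Pf y := by
      have hmem : Set.Ioo (x/2) (x+1) ∈ nhds x := isOpen_Ioo.mem_nhds ⟨by linarith, by linarith⟩
      filter_upwards [hmem] with y hy
      have hcy : c y = y := by
        rw [hcdef]
        simp only []
        rw [min_eq_left hy.2.le, max_eq_right (by linarith [hy.1] : x/2 ≤ y)]
      rw [hcy]
      exact (htprod y (by linarith [hy.1])).symm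
    have hexpcont : ContinuousAt
        (fun y => Real.exp (∑' j : ℕ, (m:ℝ) * Real.log (1 + v (c y * q ^ (j+1))))) x :=
      (Real.continuous_exp.comp hUcont).continuousAt
    exact hexpcont.congr heq
  -- differentiability
  have hHD : ∀ x : ℝ, 0 < x → HasDerivAt v (Pf x) x := by
    intro x hx
    rw [hasDerivAt_iff_tendsto_slope]
    have hminc : Tendsto (fun y => Pf (min x y)) (nhdsWithin x {x}ᶜ) (nhds (Pf x)) := by
      have h1 : ContinuousAt (fun y : ℝ => min x y) x :=
        (continuous_const.min continuous_id).continuousAt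
      have h2 : ContinuousAt (fun y : ℝ => Pf (min x y)) x := by
        apply ContinuousAt.comp (x := x) ?_ h1
        rw [min_self]
        exact hPfcont x hx
      have h3 := h2.tendsto
      simp only [min_self] at h3
      exact h3.mono_left nhdsWithin_le_nhds
    have hmaxc : Tendsto (fun y => Pf (max x y)) (nhdsWithin x {x}ᶜ) (nhds (Pf x)) := by
      have h1 : ContinuousAt (fun y : ℝ => max x y) x :=
        (continuous_const.max continuous_id).continuousAt
      have h2 : ContinuousAt (fun y : ℝ => Pf (max x y)) x := by
        apply ContinuousAt.comp (x := x) ?_ h1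
        rw [max_self]
        exact hPfcont x hx
      have h3 := h2.tendsto
      simp only [max_self] at h3
      exact h3.mono_left nhdsWithin_le_nhds
    have hbounds : ∀ᶠ y in nhdsWithin x {x}ᶜ,
        Pf (min x y) ≤ slope v x y ∧ slope v x y ≤ Pf (max x y) := by
      have hmem : Set.Ioi (0:ℝ) ∈ nhdsWithin x {x}ᶜ :=
        nhdsWithin_le_nhds (isOpen_Ioi.mem_nhds hx)
      filter_upwards [hmem, self_mem_nhdsWithin] with y hy0 hyne
      have hy0' : (0:ℝ) < y := hy0
      have hyne' : y ≠ x := hyne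
      rw [slope_def_field]
      rcases lt_or_gt_of_ne hyne' with h | h
      · -- y < x
        have hxy : y - x < 0 := by linarith
        have h1 := hlow y x hy0'.le h.le
        have h2 := hup y x hy0'.le h.le
        rw [min_eq_right h.le, max_eq_left h.le]
        constructor
        · rw [le_div_iff_of_neg hxy]
          have he : Pf y * (y - x) = -(Pf y * (x - y)) := by ring
          linarith [he, h1]
        · rw [div_le_iff_of_neg hxy]
          have he : Pf x * (y - x) = -(Pf x * (x - y)) := by ring
          linarith [he, h2]
      · -- x < y
        have hxy : (0:ℝ) < y - x := by linarith
        have h1 := hlow x y hx.le h.le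
        have h2 := hup x y hx.le h.le
        rw [min_eq_left h.le, max_eq_right h.le]
        constructor
        · rw [le_div_iff₀ hxy]
          linarith
        · rw [div_le_iff₀ hxy]
          linarith
    exact tendsto_of_tendsto_of_tendsto_of_le_of_le' hminc hmaxc
      (hbounds.mono fun y h => h.1) (hbounds.mono fun y h => h.2)
  -- final assembly
  refine ⟨hvmonoOn, hFE, ?_, ?_⟩
  · intro x hx
    refine ⟨(hHD x hx).differentiableAt, ?_⟩
    rw [(hHD x hx).deriv]
    exact hPfdef x
  · have hmem : Set.Ioo (0:ℝ) 1 ∈ nhdsWithin (0:ℝ) (Set.Ioi 0) :=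
      Ioo_mem_nhdsGT_of_mem ⟨le_refl 0, one_pos⟩
    have hlb : ∀ᶠ x in nhdsWithin (0:ℝ) (Set.Ioi 0), 1 ≤ deriv v x := by
      filter_upwards [hmem] with x hx
      rw [(hHD x hx.1).deriv]
      exact hPf1 x hx.1.le
    have hub3 : ∀ᶠ x in nhdsWithin (0:ℝ) (Set.Ioi 0),
        deriv v x ≤ Real.exp (D * (x * Real.exp (C * v 1))) := by
      filter_upwards [hmem] with x hx
      rw [(hHD x hx.1).deriv]
      have h1 : Pf x ≤ Real.exp (D * v x) := hPfub x hx.1.le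
      have h2 : v x ≤ x * Real.exp (C * v x) := hvup x hx.1.le
      have h3 : v x ≤ v 1 := hvmono x 1 hx.1.le hx.2.le
      have h4 : Real.exp (C * v x) ≤ Real.exp (C * v 1) :=
        Real.exp_le_exp.mpr (mul_le_mul_of_nonneg_left h3 hC0)
      have h5 : v x ≤ x * Real.exp (C * v 1) :=
        h2.trans (mul_le_mul_of_nonneg_left h4 hx.1.le)
      exact h1.trans (Real.exp_le_exp.mpr (mul_le_mul_of_nonneg_left h5 hD0))
    have hlayer : Tendsto (fun x : ℝ => Real.exp (D * (x * Real.exp (C * v 1))))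
        (nhdsWithin (0:ℝ) (Set.Ioi 0)) (nhds 1) := by
      have hcont : Continuous (fun x : ℝ => Real.exp (D * (x * Real.exp (C * v 1)))) := by
        fun_prop
      have h6 : nhdsWithin (0:ℝ) (Set.Ioi 0) ≤ nhds 0 := nhdsWithin_le_nhds
      have := (hcont.tendsto 0).mono_left h6
      simpa using this
    exact tendsto_of_tendsto_of_tendsto_of_le_of_le' tendsto_const_nhds hlayer hlb hub3
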